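/- The first moment of R_{η}^{(α,β)} satisfies R_{η}^{(α,β)}(t; x) = x + (1+α)/η; in particular it is independent of β. -/

import Mathlib

open Real MeasureTheory Filter Set

/-- Generalized Laguerre polynomial `L_κ^{(α)}(x)`. -/
noncomputable def lag (κ : ℕ) (α x : ℝ) : ℝ :=
  ∑ ι ∈ Finset.range (κ + 1),
    (-1 : ℝ) ^ ι / (Nat.factorial ι) *
      ((∏ s ∈ Finset.range (κ - ι), (α + ι + 1 + s)) / (Nat.factorial (κ - ι))) * x ^ ι
/-- Gamma-type kernel `I_{κ,η}^β(z)`. -/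
noncomputable def ker (η β : ℝ) (κ : ℕ) (z : ℝ) : ℝ :=
  η * β * Real.exp (-(η * β * z)) * (η * β * z) ^ ((κ : ℝ) * β - 1) / Real.Gamma ((κ : ℝ) * β)
/-- The operators `R_η^{(α,β)}(Φ; x)`, with the `κ = 0` term interpreted as `Φ(0)·(coefficient)`. -/
noncomputable def Rop (η β α : ℝ) (Φ : ℝ → ℝ) (x : ℝ) : ℝ :=
  Real.exp (-(η * x) / 2) * (2 : ℝ) ^ (-α - 1) *
    ∑' κ : ℕ, (2 : ℝ) ^ (-(κ : ℝ)) * lag κ α (-(η * x) / 2) *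
      (if κ = 0 then Φ 0 else ∫ z in Set.Ioi (0 : ℝ), ker η β κ z * Φ z)



lemma hasSum_exp_real (u : ℝ) : HasSum (fun n : ℕ => u ^ n / n.factorial) (Real.exp u) := by
  rw [Real.exp_eq_exp_ℝ]
  exact NormedSpace.expSeries_div_hasSum_exp u

lemma hasSum_shift {f : ℕ → ℝ} {a : ℝ} (h0 : f 0 = 0)
    (h : HasSum (fun n => f (n + 1)) a) : HasSum f a := by
  refine (hasSum_nat_add_iff' 1).mp ?_
  simpa [h0] using h

lemma hasSum_mul_exp (u : ℝ) :
    HasSum (fun n : ℕ => (n : ℝ) * u ^ n / n.factorial) (u * Real.exp u) := by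
  refine hasSum_shift (by simp) ?_
  have := (hasSum_exp_real u).mul_left u
  refine this.congr_fun fun n => ?_
  push_cast [Nat.factorial_succ]
  field_simp
  ring
lemma hasSum_G (a : ℝ) (ha : 0 < a) :
    HasSum (fun m : ℕ => Real.Gamma (a + m) * (1/2) ^ m / m.factorial)
      (2 ^ a * Real.Gamma a) := by
  set G : ℕ → ℝ := fun m => Real.Gamma (a + m) * (1/2) ^ m / m.factorial with hG
  have hGnn : ∀ m, 0 ≤ G m := by
    intro m
    have h1 : 0 < a + m := by positivity
    have := Real.Gamma_pos_of_pos h1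
    positivity
  set f : ℕ → ℝ → ℝ := fun m t => Real.exp (-t) * t ^ (a + m - 1) * ((1/2) ^ m / m.factorial)
    with hf
  have hfnn : ∀ m, ∀ t ∈ Ioi (0:ℝ), 0 ≤ f m t := by
    intro m t ht
    have ht' : (0:ℝ) < t := ht
    have : (0:ℝ) ≤ t ^ (a + m - 1) := rpow_nonneg ht'.le _
    positivity
  have hint : ∀ m : ℕ, IntegrableOn (f m) (Ioi 0) := by
    intro m
    exact (Real.GammaIntegral_convergent (by positivity : (0:ℝ) < a + m)).mul_const _
  have stepi : ∀ m : ℕ, ∫⁻ t in Ioi (0:ℝ), ENNReal.ofReal (f m t) = ENNReal.ofReal (G m) := by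
    intro m
    rw [← ofReal_integral_eq_lintegral_ofReal (hint m)
      (ae_restrict_of_forall_mem measurableSet_Ioi (hfnn m))]
    congr 1
    have h2 : ∫ t in Ioi (0:ℝ), f m t
        = (∫ t in Ioi (0:ℝ), Real.exp (-t) * t ^ (a + m - 1)) * ((1/2) ^ m / m.factorial) :=
      integral_mul_const _ _
    rw [h2, ← Real.Gamma_eq_integral (by positivity : (0:ℝ) < a + m)]
    rw [hG]; ring
  -- step iii : pointwise sum
  have hptsum : ∀ t ∈ Ioi (0:ℝ),
      HasSum (fun m => f m t) (t ^ (a-1) * Real.exp (-(1/2 * t))) := by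
    intro t ht
    have ht' : (0:ℝ) < t := ht
    have key : ∀ m : ℕ, f m t = (Real.exp (-t) * t ^ (a-1)) * ((t/2) ^ m / m.factorial) := by
      intro m
      have : t ^ (a + m - 1) = t ^ (a - 1) * t ^ m := by
        rw [← Real.rpow_natCast t m, ← Real.rpow_add ht']
        ring_nf
      rw [hf]; simp only []
      rw [this, div_pow, div_pow]
      field_simp
      ring
    have hs := (hasSum_exp_real (t/2)).mul_left (Real.exp (-t) * t ^ (a-1))
    have heq : (fun m : ℕ => (Real.exp (-t) * t ^ (a-1)) * ((t/2) ^ m / m.factorial))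
        = fun m => f m t := funext fun m => (key m).symm
    rw [heq] at hs
    have hval : Real.exp (-t) * t ^ (a-1) * Real.exp (t/2)
        = t ^ (a-1) * Real.exp (-(1/2 * t)) := by
      rw [mul_comm (Real.exp (-t)) (t ^ (a-1)), mul_assoc, ← Real.exp_add]
      ring_nf
    rwa [hval] at hs
  -- step iii' : pointwise tsum in ENNReal
  have hpt : ∀ t ∈ Ioi (0:ℝ), (∑' m : ℕ, ENNReal.ofReal (f m t))
      = ENNReal.ofReal (t ^ (a-1) * Real.exp (-(1/2 * t))) := by
    intro t ht
    rw [← ENNReal.ofReal_tsum_of_nonneg (fun m => hfnn m t ht) (hptsum t ht).summable,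
      (hptsum t ht).tsum_eq]
  -- step ii + iv
  have hmeas : ∀ m : ℕ, AEMeasurable (fun t : ℝ => ENNReal.ofReal (f m t))
      (volume.restrict (Ioi 0)) := by
    intro m
    apply Measurable.aemeasurable
    fun_prop
  have hiv : ∫⁻ t in Ioi (0:ℝ), ENNReal.ofReal (t ^ (a-1) * Real.exp (-(1/2 * t)))
      = ENNReal.ofReal (2 ^ a * Real.Gamma a) := by
    have hintg : IntegrableOn (fun t : ℝ => t ^ (a-1) * Real.exp (-(1/2 * t))) (Ioi 0) := by
      have h := integrableOn_rpow_mul_exp_neg_mul_rpow (by linarith : (-1:ℝ) < a - 1)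
        (zero_lt_one : (0:ℝ) < 1) (by norm_num : (0:ℝ) < 1/2)
      refine h.congr_fun (fun t ht => ?_) measurableSet_Ioi
      beta_reduce; rw [Real.rpow_one]; ring_nf
    have hnn : ∀ t ∈ Ioi (0:ℝ), 0 ≤ t ^ (a-1) * Real.exp (-(1/2 * t)) := by
      intro t ht
      have ht' : (0:ℝ) < t := ht
      have : (0:ℝ) ≤ t ^ (a-1) := rpow_nonneg ht'.le _
      positivity
    rw [← ofReal_integral_eq_lintegral_ofReal hintg
      (ae_restrict_of_forall_mem measurableSet_Ioi hnn)]
    congr 1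
    rw [integral_rpow_mul_exp_neg_mul_Ioi ha (by norm_num : (0:ℝ) < 1/2)]
    norm_num
  have key : (∑' m : ℕ, ENNReal.ofReal (G m)) = ENNReal.ofReal (2 ^ a * Real.Gamma a) := by
    calc (∑' m : ℕ, ENNReal.ofReal (G m)) = ∑' m : ℕ, ∫⁻ t in Ioi (0:ℝ), ENNReal.ofReal (f m t) := by
          simp_rw [stepi]
      _ = ∫⁻ t in Ioi (0:ℝ), ∑' m : ℕ, ENNReal.ofReal (f m t) := (lintegral_tsum hmeas).symm
      _ = ∫⁻ t in Ioi (0:ℝ), ENNReal.ofReal (t ^ (a-1) * Real.exp (-(1/2 * t))) :=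
          setLIntegral_congr_fun measurableSet_Ioi hpt
      _ = ENNReal.ofReal (2 ^ a * Real.Gamma a) := hiv
  -- conclude in ℝ
  have hsumm : Summable G := by
    have hne : (∑' m : ℕ, ENNReal.ofReal (G m)) ≠ ⊤ := by
      rw [key]; exact ENNReal.ofReal_ne_top
    have := ENNReal.summable_toReal hne
    refine this.congr fun m => ?_
    exact ENNReal.toReal_ofReal (hGnn m)
  have hts : ∑' m, G m = 2 ^ a * Real.Gamma a := by
    have h1 := congrArg ENNReal.toReal key
    rw [ENNReal.tsum_toReal_eq (fun m => ENNReal.ofReal_ne_top)] at h1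
    simp only [ENNReal.toReal_ofReal (hGnn _)] at h1
    rw [ENNReal.toReal_ofReal] at h1
    · exact h1.trans rfl
    · have := Real.Gamma_pos_of_pos ha
      positivity
  rw [← hts]
  exact hsumm.hasSum

lemma ker_moment (η β : ℝ) (hη : 0 < η) (hβ : 0 < β) (κ : ℕ) (hκ : κ ≠ 0) :
    ∫ z in Ioi (0:ℝ),
      (η * β * Real.exp (-(η * β * z)) * (η * β * z) ^ ((κ : ℝ) * β - 1)
        / Real.Gamma ((κ : ℝ) * β)) * z = (κ : ℝ) / η := by
  set l : ℝ := η * β with hl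
  have hl0 : 0 < l := by positivity
  set p : ℝ := (κ : ℝ) * β with hp
  have hp0 : 0 < p := by
    have : (0:ℝ) < (κ : ℝ) := by exact_mod_cast Nat.pos_of_ne_zero hκ
    positivity
  have hcong : ∀ z ∈ Ioi (0:ℝ),
      (l * Real.exp (-(l * z)) * (l * z) ^ (p - 1) / Real.Gamma p) * z
        = (l ^ p / Real.Gamma p) * (z ^ ((p + 1) - 1) * Real.exp (-(l * z))) := by
    intro z hz
    have hz' : (0:ℝ) < z := hz
    rw [Real.mul_rpow hl0.le hz'.le]
    rw [show (p + 1) - 1 = p by ring]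
    have h1 : l * l ^ (p - 1) = l ^ p := by
      nth_rewrite 1 [← Real.rpow_one l]
      rw [← Real.rpow_add hl0]; ring_nf
    have h2 : z ^ (p - 1) * z = z ^ p := by
      nth_rewrite 2 [← Real.rpow_one z]
      rw [← Real.rpow_add hz']; ring_nf
    field_simp
    rw [← h1, ← h2]
    ring
  rw [setIntegral_congr_fun measurableSet_Ioi hcong, integral_const_mul,
    integral_rpow_mul_exp_neg_mul_Ioi (by linarith) hl0,
    Real.Gamma_add_one hp0.ne']
  rw [one_div, Real.rpow_add (by positivity), Real.rpow_one]
  have hΓ : Real.Gamma p ≠ 0 := (Real.Gamma_pos_of_pos hp0).ne'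
  have hlp : l ^ p ≠ 0 := by positivity
  have hinv : (l⁻¹ : ℝ) ^ p = (l ^ p)⁻¹ := Real.inv_rpow hl0.le p
  rw [hinv]
  field_simp
  rw [hp, hl]
  ring


lemma gamma_prod (a : ℝ) (ha : 0 < a) (m : ℕ) :
    Real.Gamma (a + m) = Real.Gamma a * ∏ s ∈ Finset.range m, (a + s) := by
  induction m with
  | zero => simp
  | succ n ih =>
    have h : a + (n + 1 : ℕ) = (a + n) + 1 := by push_cast; ring
    rw [h, Real.Gamma_add_one (by positivity), ih, Finset.prod_range_succ]
    push_cast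
    ring


lemma hasSum_binom (a : ℝ) (ha : 0 < a) :
    HasSum (fun m : ℕ => (∏ s ∈ Finset.range m, (a + s)) / m.factorial * (1/2) ^ m)
      ((2:ℝ) ^ a) := by
  have hΓ : (0:ℝ) < Real.Gamma a := Real.Gamma_pos_of_pos ha
  have h := (hasSum_G a ha).div_const (Real.Gamma a)
  have hv : 2 ^ a * Real.Gamma a / Real.Gamma a = (2:ℝ) ^ a := by field_simp
  rw [hv] at h
  refine h.congr_fun fun m => ?_
  rw [gamma_prod a ha m]
  field_simp

lemma hasSum_mul_binom (a : ℝ) (ha : 0 < a) :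
    HasSum (fun m : ℕ => (m : ℝ) * ((∏ s ∈ Finset.range m, (a + s)) / m.factorial) * (1/2) ^ m)
      (a * (2:ℝ) ^ a) := by
  refine hasSum_shift (by simp) ?_
  have h := (hasSum_binom (a+1) (by linarith)).mul_left (a/2)
  have hv : a / 2 * (2:ℝ) ^ (a + 1) = a * 2 ^ a := by
    rw [Real.rpow_add (by norm_num), Real.rpow_one]; ring
  rw [hv] at h
  refine h.congr_fun fun m => ?_
  have hprod : ∏ s ∈ Finset.range (m+1), (a + s) = a * ∏ s ∈ Finset.range m, (a + 1 + s) := by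
    rw [Finset.prod_range_succ']
    simp only [Nat.cast_add, Nat.cast_one, Nat.cast_zero]
    rw [add_zero, mul_comm]
    congr 1
    refine Finset.prod_congr rfl fun s _ => by push_cast; ring
  rw [hprod, Nat.factorial_succ]
  push_cast
  field_simp
  ring

noncomputable def gfun (η α u : ℝ) (p : ℕ × ℕ) : ℝ :=
  1/η * (1/2) ^ (p.1 + p.2) * ((p.1 : ℝ) + p.2) * (u ^ p.1 / p.1.factorial) *
    ((∏ s ∈ Finset.range p.2, (α + p.1 + 1 + s)) / p.2.factorial)

lemma gfun_nonneg {η α u : ℝ} (hη : 0 < η) (hα : -1 < α) (hu : 0 ≤ u) (p : ℕ × ℕ) :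
    0 ≤ gfun η α u p := by
  have hprod : 0 ≤ ∏ s ∈ Finset.range p.2, (α + p.1 + 1 + (s:ℝ)) :=
    Finset.prod_nonneg fun s _ => by
    have h1 : (0:ℝ) ≤ (p.1:ℝ) := Nat.cast_nonneg _
    have h2 : (0:ℝ) ≤ (s:ℝ) := Nat.cast_nonneg _
    linarith
  have h1 : (0:ℝ) ≤ (p.1 : ℝ) + p.2 := by positivity
  unfold gfun
  positivity

lemma hasSum_row (η α u : ℝ) (hη : 0 < η) (hα : -1 < α) (ι : ℕ) :
    HasSum (fun m => gfun η α u (ι, m))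
      (1/η * (2:ℝ) ^ (α+1) * ((α+1) + 2*ι) * (u ^ ι / ι.factorial)) := by
  set a : ℝ := α + ι + 1 with ha_def
  have ha : 0 < a := by
    have : (0:ℝ) ≤ (ι:ℝ) := Nat.cast_nonneg _
    simp only [ha_def]; linarith
  have h1 := ((hasSum_binom a ha).mul_left (ι:ℝ)).add (hasSum_mul_binom a ha)
  have h2 := h1.mul_left (1/η * (1/2) ^ ι * (u ^ ι / ι.factorial))
  have hval : 1/η * (1/2) ^ ι * (u ^ ι / ι.factorial) * ((ι:ℝ) * (2:ℝ)^a + a * (2:ℝ)^a)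
      = 1/η * (2:ℝ) ^ (α+1) * ((α+1) + 2*ι) * (u ^ ι / ι.factorial) := by
    have h2a : (2:ℝ) ^ a = (2:ℝ) ^ (α+1) * 2 ^ ι := by
      rw [ha_def, show α + ι + 1 = (α + 1) + (ι:ℝ) by ring, Real.rpow_add (by norm_num),
        Real.rpow_natCast]
    rw [h2a]
    have h2b : ((1:ℝ)/2) ^ ι * 2 ^ ι = 1 := by
      rw [one_div, inv_pow, inv_mul_cancel₀ (by positivity)]
    field_simp
    rw [ha_def]
    linear_combination (u^ι*ι*2 + u^ι*α + u^ι) * h2b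
  rw [hval] at h2
  refine h2.congr_fun fun m => ?_
  unfold gfun
  simp only
  rw [pow_add]
  push_cast
  ring

lemma hasSum_outer (η α u : ℝ) (hη : 0 < η) :
    HasSum (fun ι : ℕ => 1/η * (2:ℝ) ^ (α+1) * ((α+1) + 2*ι) * (u ^ ι / ι.factorial))
      (1/η * (2:ℝ) ^ (α+1) * Real.exp u * ((α+1) + 2*u)) := by
  have h := (((hasSum_exp_real u).mul_left (α+1)).add ((hasSum_mul_exp u).mul_left 2)).mul_left
    (1/η * (2:ℝ) ^ (α+1))
  have hval : 1/η * (2:ℝ) ^ (α+1) * ((α+1) * Real.exp u + 2 * (u * Real.exp u))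
      = 1/η * (2:ℝ) ^ (α+1) * Real.exp u * ((α+1) + 2*u) := by ring
  rw [hval] at h
  refine h.congr_fun fun ι => ?_
  ring

lemma hasSum_gfun (η α u : ℝ) (hη : 0 < η) (hα : -1 < α) (hu : 0 ≤ u) :
    HasSum (gfun η α u) (1/η * (2:ℝ) ^ (α+1) * Real.exp u * ((α+1) + 2*u)) := by
  have hrows := hasSum_row η α u hη hα
  have houter := hasSum_outer η α u hη
  have hsummable : Summable (gfun η α u) := by
    rw [summable_prod_of_nonneg (fun p => gfun_nonneg hη hα hu p)]
    exact ⟨fun ι => (hrows ι).summable,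
      houter.summable.congr fun ι => ((hrows ι).tsum_eq).symm⟩
  have h2 := hsummable.hasSum.prod_fiberwise hrows
  exact (h2.unique houter) ▸ hsummable.hasSum

lemma hasSum_T (η α u : ℝ) (hη : 0 < η) (hα : -1 < α) (hu : 0 ≤ u) :
    HasSum (fun κ : ℕ => ∑ p ∈ Finset.HasAntidiagonal.antidiagonal κ, gfun η α u p)
      (1/η * (2:ℝ) ^ (α+1) * Real.exp u * ((α+1) + 2*u)) := by
  have hS := hasSum_gfun η α u hη hα hu
  have hE : HasSum (gfun η α u ∘ Finset.HasAntidiagonal.sigmaAntidiagonalEquivProd)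
      (1/η * (2:ℝ) ^ (α+1) * Real.exp u * ((α+1) + 2*u)) :=
    (Equiv.hasSum_iff _).mpr hS
  refine hE.sigma fun κ => ?_
  have := hasSum_fintype (fun q : (Finset.HasAntidiagonal.antidiagonal κ : Finset (ℕ × ℕ)) => gfun η α u q.val)
  simpa [Finset.sum_attach] using this

/-- The first moment of `R_η^{(α,β)}` is independent of `β`. -/
theorem stmt7 (α β η x : ℝ) (hα : -1 < α) (hβ : 0 < β) (hη : 0 < η) (hx : 0 ≤ x) :
    Rop η β α (fun t => t) x = x + (1 + α) / η := by
  obtain ⟨u, hu_def⟩ : ∃ u : ℝ, u = η * x / 2 := ⟨_, rfl⟩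
  have hu : 0 ≤ u := by rw [hu_def]; positivity
  have hy : -(η * x) / 2 = -u := by rw [hu_def]; ring
  have hT := hasSum_T η α u hη hα hu
  have hbody : (fun κ : ℕ => (2:ℝ) ^ (-(κ:ℝ)) * lag κ α (-(η * x) / 2) *
      (if κ = 0 then (fun t : ℝ => t) 0 else ∫ z in Set.Ioi (0:ℝ), _root_.ker η β κ z * (fun t : ℝ => t) z))
      = fun κ => ∑ p ∈ Finset.HasAntidiagonal.antidiagonal κ, gfun η α u p := by
    funext κ
    rcases Nat.eq_zero_or_pos κ with hκ | hκ
    · subst hκ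
      simp [gfun]
    · have hκ0 : κ ≠ 0 := hκ.ne'
      rw [if_neg hκ0]
      have hker : ∫ z in Set.Ioi (0:ℝ), _root_.ker η β κ z * (fun t : ℝ => t) z = (κ:ℝ) / η := by
        simp only [_root_.ker]
        exact ker_moment η β hη hβ κ hκ0
      rw [hker, hy]
      have h2κ : (2:ℝ) ^ (-(κ:ℝ)) = (1/2:ℝ) ^ κ := by
        rw [Real.rpow_neg (by norm_num), Real.rpow_natCast, one_div, inv_pow]
      rw [h2κ, Finset.Nat.sum_antidiagonal_eq_sum_range_succ_mk, lag, Finset.mul_sum,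
        Finset.sum_mul]
      refine Finset.sum_congr rfl fun ι hι => ?_
      have hικ : ι ≤ κ := Nat.lt_succ_iff.mp (Finset.mem_range.mp hι)
      unfold gfun
      simp only
      rw [Nat.add_sub_cancel' hικ]
      have hcast : ((ι:ℝ) + ((κ - ι : ℕ):ℝ)) = (κ:ℝ) := by
        rw [← Nat.cast_add, Nat.add_sub_cancel' hικ]
      rw [hcast, neg_pow]
      have hsgn : ((-1:ℝ)) ^ ι * ((-1:ℝ)) ^ ι = 1 := by
        rw [← pow_add]
        exact Even.neg_one_pow ⟨ι, by ring⟩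
      linear_combination ((1/2:ℝ)^κ * (u^ι / (ι.factorial:ℝ)) *
        ((∏ s ∈ Finset.range (κ - ι), (α + ι + 1 + (s:ℝ))) / ((κ - ι).factorial:ℝ)) *
        ((κ:ℝ)/η)) * hsgn
  simp only [Rop]
  rw [hbody, hT.tsum_eq, hy]
  have e1 : Real.exp (-u) * Real.exp u = 1 := by rw [← Real.exp_add]; simp
  have e2 : (2:ℝ) ^ (-α-1) * (2:ℝ) ^ (α+1) = 1 := by
    rw [← Real.rpow_add (by norm_num)]; norm_num
  have : Real.exp (-u) * (2:ℝ) ^ (-α-1) * (1/η * (2:ℝ) ^ (α+1) * Real.exp u * ((α+1) + 2*u))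
      = (Real.exp (-u) * Real.exp u) * ((2:ℝ) ^ (-α-1) * (2:ℝ) ^ (α+1)) *
        (1/η * ((α+1) + 2*u)) := by ring
  rw [this, e1, e2, hu_def]
  field_simp
  ring
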